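/- Let $(x^n)_{n\ge1}$ be real random variables with $x^n\to x$ a.s., $x\ge 0$ a.s., and $\sup_n \mathbb{E}[(x^n-\mathbb{E}[x^n])^2]\le C<\infty$. Then $\sup_n|\mathbb{E}[x^n]|<\infty$. -/

import Mathlib

open MeasureTheory

/-- If `xⁿ → x` a.s. with `x ≥ 0` a.s. and uniformly bounded variances, then the
means `E[xⁿ]` are bounded. -/
theorem stmt_18
    {Ω : Type*} [MeasurableSpace Ω] (P : Measure Ω) [IsProbabilityMeasure P]
    (x : Ω → ℝ) (xn : ℕ → Ω → ℝ) (C : ℝ)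
    (hint : ∀ n, MemLp (xn n) 2 P)
    (hconv : ∀ᵐ ω ∂P, Filter.Tendsto (fun n => xn n ω) Filter.atTop (nhds (x ω)))
    (hpos : ∀ᵐ ω ∂P, 0 ≤ x ω)
    (hvar : ∀ n, (∫ ω, (xn n ω - ∫ ω', xn n ω' ∂P) ^ 2 ∂P) ≤ C) :
    ∃ M : ℝ, ∀ n, |∫ ω, xn n ω ∂P| ≤ M := by
  by_contra h
  push_neg at h
  set m : ℕ → ℝ := fun n => ∫ ω, xn n ω ∂P with hm
  choose f hf using fun k : ℕ => h k
  -- hf : ∀ k, (k:ℝ) < |m (f k)|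
  have hmeas : ∀ k, AEMeasurable
      (fun ω => ENNReal.ofReal ((xn (f k) ω - m (f k)) ^ 2)) P := fun k =>
    ((((hint (f k)).aestronglyMeasurable.aemeasurable.sub aemeasurable_const).pow
      aemeasurable_const)).ennreal_ofReal
  have hintk : ∀ n, Integrable (fun ω => (xn n ω - m n) ^ 2) P := fun n =>
    ((hint n).sub (memLp_const (m n))).integrable_sq
  have hbound : ∀ k, ∫⁻ ω, ENNReal.ofReal ((xn (f k) ω - m (f k)) ^ 2) ∂P ≤
      ENNReal.ofReal C := by
    intro k
    rw [← ofReal_integral_eq_lintegral_ofReal (hintk (f k))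
      (Filter.Eventually.of_forall fun ω => sq_nonneg _)]
    exact ENNReal.ofReal_le_ofReal (hvar (f k))
  have fatou := lintegral_liminf_le' (u := Filter.atTop) hmeas
  have htop : ∀ᵐ ω ∂P, Filter.liminf
      (fun k => ENNReal.ofReal ((xn (f k) ω - m (f k)) ^ 2)) Filter.atTop = ⊤ := by
    filter_upwards [hconv] with ω hω
    obtain ⟨B, hB⟩ := (hω.abs.bddAbove_range)
    have hB' : ∀ n, |xn n ω| ≤ B := fun n => hB ⟨n, rfl⟩
    have h1 : Filter.Tendsto (fun k : ℕ => ((k : ℝ) - B) ^ 2) Filter.atTop Filter.atTop :=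
      (Filter.tendsto_pow_atTop two_ne_zero).comp
        (Filter.tendsto_atTop_add_const_right _ (-B) tendsto_natCast_atTop_atTop)
    have h2 : Filter.Tendsto (fun k => (xn (f k) ω - m (f k)) ^ 2) Filter.atTop
        Filter.atTop := by
      apply Filter.tendsto_atTop_mono' _ _ h1
      filter_upwards [Filter.eventually_ge_atTop ⌈B⌉₊] with k hk
      have hkB : B ≤ (k : ℝ) := le_trans (Nat.le_ceil B) (Nat.cast_le.2 hk)
      have habs : (k : ℝ) - B ≤ |xn (f k) ω - m (f k)| := by
        have h3 : |m (f k)| - |xn (f k) ω| ≤ |m (f k) - xn (f k) ω| :=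
          abs_sub_abs_le_abs_sub _ _
        rw [abs_sub_comm] at h3
        have := hf k
        have := hB' (f k)
        linarith
      calc ((k : ℝ) - B) ^ 2 ≤ |xn (f k) ω - m (f k)| ^ 2 :=
            pow_le_pow_left₀ (by linarith) habs 2
        _ = (xn (f k) ω - m (f k)) ^ 2 := sq_abs _
    exact (ENNReal.tendsto_ofReal_atTop.comp h2).liminf_eq
  have hinf : ∫⁻ ω, Filter.liminf
      (fun k => ENNReal.ofReal ((xn (f k) ω - m (f k)) ^ 2)) Filter.atTop ∂P = ⊤ := by
    rw [lintegral_congr_ae htop, lintegral_const]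
    simp
  have hfin : Filter.liminf
      (fun k => ∫⁻ ω, ENNReal.ofReal ((xn (f k) ω - m (f k)) ^ 2) ∂P) Filter.atTop ≤
      ENNReal.ofReal C := by
    refine le_trans (Filter.liminf_le_liminf (Filter.Eventually.of_forall hbound)) ?_
    simp [Filter.liminf_const]
  rw [hinf] at fatou
  exact absurd (le_trans fatou hfin) (by simp [ENNReal.ofReal_lt_top.ne])
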